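/- A crossing family F over a finite set V admits a ∩∪-closed cosigning if and only if: for all Z, T ∈ F with Z ∩ T ≠ ∅, the set Z ∩ T includes an element u such that V\{u} ≠ B ∪ W for all B, W ∈ F; and for all X, Y ∈ F with X ∪ Y ≠ V, there exists an element v ∉ X ∪ Y such that {v} ≠ H ∩ G for all G, H ∈ F. -/
import Mathlib


/-- A crossing family `F` over a finite set `V` admits a `∩∪`-closed
cosigning if and only if: for all `Z, T ∈ F` that intersect, `Z ∩ T` includes an element `u`
with `V \ {u} ≠ B ∪ W` for all `B, W ∈ F`; and for all `X, Y ∈ F` that co-intersect, there is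
an element `v ∉ X ∪ Y` with `{v} ≠ H ∩ G` for all `G, H ∈ F`. (`true` = `+`, `false` = `−`.) -/
theorem stmt_2 {V : Type*} [Fintype V] (F : Set (Set V))
    (hF : ∀ U ∈ F, U ≠ ∅ ∧ U ≠ Set.univ)
    (hcross : ∀ U ∈ F, ∀ W ∈ F, (U ∩ W).Nonempty → U ∪ W ≠ Set.univ →
      U ∩ W ∈ F ∧ U ∪ W ∈ F) :
    (∃ σ : V → Bool,
        (∀ X ∈ F, ∀ Y ∈ F, (X ∩ Y).Nonempty → ∃ u ∈ X ∩ Y, σ u = true) ∧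
        (∀ X ∈ F, ∀ Y ∈ F, X ∪ Y ≠ Set.univ → ∃ v ∉ X ∪ Y, σ v = false)) ↔
      ((∀ Z ∈ F, ∀ T ∈ F, (Z ∩ T).Nonempty →
          ∃ u ∈ Z ∩ T, ∀ B ∈ F, ∀ W ∈ F, ({u}ᶜ : Set V) ≠ B ∪ W) ∧
       (∀ X ∈ F, ∀ Y ∈ F, X ∪ Y ≠ Set.univ →
          ∃ v ∉ X ∪ Y, ∀ G ∈ F, ∀ H ∈ F, ({v} : Set V) ≠ H ∩ G)) := by
  constructor
  · rintro ⟨σ, h1, h2⟩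
    constructor
    · intro Z hZ T hT hint
      obtain ⟨u, hu, hσu⟩ := h1 Z hZ T hT hint
      refine ⟨u, hu, ?_⟩
      intro B hB W hW hc
      have hne : B ∪ W ≠ Set.univ := by
        intro h
        have hmem : u ∈ B ∪ W := h ▸ Set.mem_univ u
        rw [← hc] at hmem
        exact hmem rfl
      obtain ⟨v, hv, hσv⟩ := h2 B hB W hW hne
      have hvu : v = u := by
        by_contra h
        exact hv (hc ▸ (show v ∈ ({u}ᶜ : Set V) by
          simpa [Set.mem_compl_iff, Set.mem_singleton_iff] using h))
      rw [hvu, hσu] at hσv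
      exact Bool.noConfusion hσv
    · intro X hX Y hY hne
      obtain ⟨v, hv, hσv⟩ := h2 X hX Y hY hne
      refine ⟨v, hv, ?_⟩
      intro G hG H hH hc
      have hint : (H ∩ G).Nonempty := ⟨v, by rw [← hc]; rfl⟩
      obtain ⟨u, hu, hσu⟩ := h1 H hH G hG hint
      rw [← hc] at hu
      have huv : u = v := hu
      rw [huv, hσv] at hσu
      exact Bool.noConfusion hσu
  · rintro ⟨c1, c2⟩
    classical
    -- N is the set of "forced negative" elements
    set N : Set V := {u | ∃ B ∈ F, ∃ W ∈ F, ({u}ᶜ : Set V) = B ∪ W} with hNdef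
    -- Good R : R avoids N and hits every nonempty intersection of two members of F
    set Good : Finset V → Prop := fun R =>
      (∀ X ∈ F, ∀ Y ∈ F, (X ∩ Y).Nonempty → ∃ u, u ∈ X ∩ Y ∧ u ∈ R) ∧
      (∀ u ∈ R, u ∉ N) with hGdef
    have h0 : Good (Finset.univ.filter (fun u => u ∉ N)) := by
      constructor
      · intro X hX Y hY hint
        obtain ⟨u, hu, hu2⟩ := c1 X hX Y hY hint
        refine ⟨u, hu, ?_⟩
        simp only [Finset.mem_filter, Finset.mem_univ, true_and]
        rintro ⟨B, hB, W, hW, hc⟩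
        exact hu2 B hB W hW hc
      · intro u hu
        simpa using (Finset.mem_filter.mp hu).2
    have hne0 : (Finset.univ.powerset.filter Good).Nonempty :=
      ⟨_, Finset.mem_filter.mpr ⟨Finset.mem_powerset.mpr (Finset.subset_univ _), h0⟩⟩
    obtain ⟨R, hRmem, hRmin⟩ := Finset.exists_min_image _ Finset.card hne0
    have hRGood : Good R := (Finset.mem_filter.mp hRmem).2
    have hmin : ∀ v ∈ R, ¬ Good (R.erase v) := by
      intro v hv hg
      have hmem : R.erase v ∈ Finset.univ.powerset.filter Good :=
        Finset.mem_filter.mpr ⟨Finset.mem_powerset.mpr (Finset.subset_univ _), hg⟩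
      have hle := hRmin _ hmem
      have hlt : (R.erase v).card < R.card := Finset.card_erase_lt_of_mem hv
      omega
    refine ⟨fun v => if v ∈ R then true else false, ?_, ?_⟩
    · intro X hX Y hY hint
      obtain ⟨u, hu, huR⟩ := hRGood.1 X hX Y hY hint
      exact ⟨u, hu, if_pos huR⟩
    · intro X hX Y hY hXY
      by_contra hcon
      push_neg at hcon
      have hsub : ∀ v, v ∉ X ∪ Y → v ∈ R := by
        intro v hv
        by_contra hvR
        exact hcon v hv (if_neg hvR)
      obtain ⟨v, hvXY, hvA⟩ := c2 X hX Y hY hXY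
      have hvR : v ∈ R := hsub v hvXY
      have hnotGood := hmin v hvR
      have h2' : ∀ u ∈ R.erase v, u ∉ N :=
        fun u hu => hRGood.2 u (Finset.mem_of_mem_erase hu)
      have hfail : ¬ (∀ X ∈ F, ∀ Y ∈ F, (X ∩ Y).Nonempty →
          ∃ u, u ∈ X ∩ Y ∧ u ∈ R.erase v) := by
        intro h
        exact hnotGood ⟨h, h2'⟩
      push_neg at hfail
      obtain ⟨Z, hZ, W, hW, hZW, hfail2⟩ := hfail
      have hSRv : ∀ u, u ∈ Z ∩ W → u ∈ R → u = v := by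
        intro u hu huR
        by_contra hne'
        exact hfail2 u hu (Finset.mem_erase.mpr ⟨hne', huR⟩)
      have hSRv' : ∀ u, u ∈ W ∩ Z → u ∈ R → u = v :=
        fun u hu => hSRv u ⟨hu.2, hu.1⟩
      have hvS : v ∈ Z ∩ W := by
        obtain ⟨u, hu, huR⟩ := hRGood.1 Z hZ W hW hZW
        have heq := hSRv u hu huR
        rwa [heq] at hu
      -- key step: if G ∩ H hits C (⊆ X ∪ Y) then G ∪ C must be univ
      have step : ∀ C G H : Set V, C ∈ F → G ∈ F → H ∈ F → C ⊆ X ∪ Y →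
          (∀ u, u ∈ G ∩ H → u ∈ R → u = v) → (G ∩ H ∩ C).Nonempty →
          G ∪ C = Set.univ := by
        intro C G H hC hG hH hCsub hrep hne'
        by_contra hGC
        obtain ⟨w, hw⟩ := hne'
        have hGCne : (G ∩ C).Nonempty := ⟨w, hw.1.1, hw.2⟩
        obtain ⟨hGCF, -⟩ := hcross G hG C hC hGCne hGC
        have hint2 : ((G ∩ C) ∩ H).Nonempty := ⟨w, ⟨hw.1.1, hw.2⟩, hw.1.2⟩
        obtain ⟨u, hu, huR⟩ := hRGood.1 (G ∩ C) hGCF H hH hint2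
        have huv : u = v := hrep u ⟨hu.1.1, hu.2⟩ huR
        exact hvXY (hCsub (huv ▸ hu.1.2))
      -- a common sub-argument: if S ∩ C ≠ ∅ for C ∈ {X,Y}, derive v ∈ N, contradiction
      have main : ∀ C : Set V, C ∈ F → C ⊆ X ∪ Y → (Z ∩ W ∩ C).Nonempty → False := by
        intro C hC hCsub hSC
        have hZC := step C Z W hC hZ hW hCsub hSRv hSC
        have hSC' : (W ∩ Z ∩ C).Nonempty := by
          obtain ⟨w, hw⟩ := hSC
          exact ⟨w, ⟨hw.1.2, hw.1.1⟩, hw.2⟩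
        have hWC := step C W Z hC hW hZ hCsub hSRv' hSC'
        have hTS : ∀ t, t ∉ X ∪ Y → t = v := by
          intro t ht
          have htZ : t ∈ Z := by
            have ht2 : t ∈ Z ∪ C := hZC ▸ Set.mem_univ t
            rcases ht2 with h | h
            · exact h
            · exact absurd (hCsub h) ht
          have htW : t ∈ W := by
            have ht2 : t ∈ W ∪ C := hWC ▸ Set.mem_univ t
            rcases ht2 with h | h
            · exact h
            · exact absurd (hCsub h) ht
          exact hSRv t ⟨htZ, htW⟩ (hsub t ht)
        have hNv : ({v}ᶜ : Set V) = X ∪ Y := by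
          ext t
          simp only [Set.mem_compl_iff, Set.mem_singleton_iff]
          constructor
          · intro htne
            by_contra ht
            exact htne (hTS t ht)
          · intro ht hteq
            exact hvXY (hteq ▸ ht)
        exact hRGood.2 v hvR ⟨X, hX, Y, hY, hNv⟩
      by_cases hSX : (Z ∩ W ∩ X).Nonempty
      · exact main X hX Set.subset_union_left hSX
      · by_cases hSY : (Z ∩ W ∩ Y).Nonempty
        · exact main Y hY Set.subset_union_right hSY
        · -- S ⊆ (X ∪ Y)ᶜ ⊆ R, so S = {v}, contradicting the choice of v
          have hS1 : ∀ u, u ∈ Z ∩ W → u = v := by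
            intro u hu
            have huXY : u ∉ X ∪ Y := by
              rintro (h | h)
              · exact hSX ⟨u, hu, h⟩
              · exact hSY ⟨u, hu, h⟩
            exact hSRv u hu (hsub u huXY)
          have hsing : ({v} : Set V) = Z ∩ W := by
            ext t
            simp only [Set.mem_singleton_iff]
            constructor
            · rintro rfl; exact hvS
            · intro ht; exact hS1 t ht
          exact hvA W hW Z hZ hsing
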